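/- There exists an election with exactly 4 candidates and a candidate x such that x ≥_{5/8} y for every other candidate y, yet x is not ranked first in some 3-wise median of the election. (Hence the smallest α such that 'x ≥_α y for all y ≠ x implies x is ranked first in every 3-wise median' for 4-candidate elections satisfies α > 5/8.) -/
import Mathlib


open Finset

/-- A ranking (strict total order) of the finite candidate set `C`, encoded as a
bijection with `Fin (Fintype.card C)`; position `0` is the top of the ranking. -/
abbrev Ranking (C : Type*) [Fintype C] := C ≃ Fin (Fintype.card C)

section Defs

variable {C : Type*} [Fintype C] [DecidableEq C]

/-- `x` is ranked (strictly) before `y` in the ranking `π`. -/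
def Before (π : Ranking C) (x y : C) : Prop := π x < π y

instance (π : Ranking C) (x y : C) : Decidable (Before π x y) :=
  inferInstanceAs (Decidable (π x < π y))

instance : DecidableEq (Ranking C) := fun a b =>
  decidable_of_iff (∀ i, a i = b i) Equiv.ext_iff.symm

/-- The top-ranked element of `S ⊆ C` according to `π` (`⊤` if `S = ∅`). -/
def topS (π : Ranking C) (S : Finset C) : WithTop C :=
  (S.image π).min.map (fun i => π.symm i)

/-- The `k`-wise Kendall-tau distance between two rankings: the number of subsets
`S ⊆ C` with `|S| ≤ k` on whose top element the two rankings disagree (subsets of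
size at most one never contribute). -/
def kDist (k : ℕ) (π σ : Ranking C) : ℕ :=
  ((Finset.univ : Finset C).powerset.filter
    (fun S => S.card ≤ k ∧ topS π S ≠ topS σ S)).card

/-- The `k`-wise Kendall-tau distance from a ranking to a voting profile. -/
def kDistV (k : ℕ) (π : Ranking C) (V : Multiset (Ranking C)) : ℕ :=
  (V.map (fun σ => kDist k π σ)).sum

/-- `π` is a `k`-wise median (for `k = 2`: a Kemeny ranking) of the profile `V`. -/
def IsKMedian (k : ℕ) (V : Multiset (Ranking C)) (π : Ranking C) : Prop :=
  ∀ σ : Ranking C, kDistV k π V ≤ kDistV k σ V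

/-- The number of votes of `V` in which `x` is ranked before `y`. -/
def votesBefore (V : Multiset (Ranking C)) (x y : C) : ℕ :=
  Multiset.card (V.filter (fun v => Before v x y))

/-- `x ≥ₛ y` : `x` is ranked before `y` in at least `s·|V|` of the votes. -/
def AtLeastRatio (V : Multiset (Ranking C)) (s : ℝ) (x y : C) : Prop :=
  s * (Multiset.card V : ℝ) ≤ (votesBefore V x y : ℝ)

/-- `x >ₛ y` : `x` is ranked before `y` in more than `s·|V|` of the votes. -/
def MoreThanRatio (V : Multiset (Ranking C)) (s : ℝ) (x y : C) : Prop :=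
  s * (Multiset.card V : ℝ) < (votesBefore V x y : ℝ)

noncomputable instance (V : Multiset (Ranking C)) (s : ℝ) (x y : C) :
    Decidable (AtLeastRatio V s x y) :=
  inferInstanceAs (Decidable (s * (Multiset.card V : ℝ) ≤ (votesBefore V x y : ℝ)))

/-- `x` is a non-dirty candidate w.r.t. threshold `s`. -/
def NonDirty (V : Multiset (Ranking C)) (s : ℝ) (x : C) : Prop :=
  ∀ y : C, y ≠ x → AtLeastRatio V s x y ∨ AtLeastRatio V s y x

/-- `x` is ranked first (is the winner) in the ranking `π`. -/
def RankedFirst (π : Ranking C) (x : C) : Prop :=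
  ∀ y : C, y ≠ x → Before π x y

instance (π : Ranking C) (x : C) : Decidable (RankedFirst π x) :=
  inferInstanceAs (Decidable (∀ y : C, y ≠ x → Before π x y))

end Defs

/-- there is a 4-candidate election and a candidate `x` with
`x ≥_{5/8} y` for every other `y`, yet `x` is not ranked first in some 3-wise median. -/

def mkR (f g : Fin 4 → Fin 4) (h1 : ∀ x, g (f x) = x) (h2 : ∀ x, f (g x) = x) :
    Ranking (Fin 4) := ⟨f, g, h1, h2⟩

def v1 : Ranking (Fin 4) := mkR ![1,0,2,3] ![1,0,2,3] (by decide) (by decide)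
def v4 : Ranking (Fin 4) := mkR ![2,3,0,1] ![2,3,0,1] (by decide) (by decide)
def v5 : Ranking (Fin 4) := mkR ![2,3,1,0] ![3,2,0,1] (by decide) (by decide)
def v6 : Ranking (Fin 4) := mkR ![0,1,3,2] ![0,1,3,2] (by decide) (by decide)
def v7 : Ranking (Fin 4) := mkR ![1,3,2,0] ![3,0,2,1] (by decide) (by decide)
def v8 : Ranking (Fin 4) := mkR ![1,2,0,3] ![2,0,1,3] (by decide) (by decide)

def myV : Multiset (Ranking (Fin 4)) := {v1, v1, v1, v4, v5, v6, v7, v8}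

theorem stmt14 :
    ∃ (V : Multiset (Ranking (Fin 4))) (x : Fin 4),
      V ≠ 0 ∧
      (∀ y : Fin 4, y ≠ x → AtLeastRatio V (5 / 8) x y) ∧
      ∃ π : Ranking (Fin 4), IsKMedian 3 V π ∧ ¬ RankedFirst π x := by
  refine ⟨myV, 0, by decide, ?_, v1, by unfold IsKMedian; decide, by decide⟩
  intro y hy
  unfold AtLeastRatio
  have hc : Multiset.card myV = 8 := by decide
  have hv : votesBefore myV 0 y = 5 := by
    fin_cases y <;> simp_all <;> decide
  rw [hc, hv]; norm_num
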